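/- Let C be a nonnegative bounded random variable, p ∈ (0,1], and define the unlimited-cache thresholds T₁ = 0, T_{L+1} = p·E[C] + (1−p)·E[min(C, T_L)], and the non-causal-knowledge values V₀^{NCK} = E[C], V_G^{NCK} = E[min(C, V_{G−1}^{NCK})]. Then for every L ≥ 1 and G ≥ 0, T_L ≤ V_0^{NCK} = E[C], and the limit T_∞ = lim T_L satisfies T_∞ ≥ lim_G V_G^{NCK} when p ≤ 1. -/

import Mathlib

open MeasureTheory

section Aux

variable {Ω : Type*} [MeasurableSpace Ω] {μ : Measure Ω} [IsProbabilityMeasure μ]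
  {C : Ω → ℝ}

lemma aux_int_min (hCint : Integrable C μ) (t : ℝ) :
    Integrable (fun ω => min (C ω) t) μ := by
  simpa [Pi.inf_def] using hCint.inf (integrable_const t)

end Aux

/-- Comparison of the unlimited-cache thresholds `T_L` and the non-causal-knowledge
values `V_G`: every threshold is at most `V₀ = E[C]`, both sequences converge, and
the limit of the thresholds dominates the limit of the non-causal-knowledge values. -/
theorem thresholds_vs_NCK
    {Ω : Type*} [MeasurableSpace Ω] (μ : Measure Ω) [IsProbabilityMeasure μ]
    (C : Ω → ℝ) (hCmeas : Measurable C) (hCnonneg : ∀ ω, 0 ≤ C ω)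
    (M : ℝ) (hCbdd : ∀ ω, C ω ≤ M) (hCint : Integrable C μ)
    (p : ℝ) (hp : p ∈ Set.Ioc (0 : ℝ) 1)
    (T : ℕ → ℝ) (hT1 : T 1 = 0)
    (hTrec : ∀ L, 1 ≤ L →
      T (L + 1) = p * (∫ ω, C ω ∂μ) + (1 - p) * ∫ ω, min (C ω) (T L) ∂μ)
    (V : ℕ → ℝ) (hV0 : V 0 = ∫ ω, C ω ∂μ)
    (hVrec : ∀ G : ℕ, V (G + 1) = ∫ ω, min (C ω) (V G) ∂μ) :
    (∀ L, 1 ≤ L → T L ≤ V 0) ∧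
      ∃ Tlim Vlim : ℝ,
        Filter.Tendsto T Filter.atTop (nhds Tlim) ∧
        Filter.Tendsto V Filter.atTop (nhds Vlim) ∧
        Vlim ≤ Tlim := by
  obtain ⟨hp0, hp1⟩ := hp
  set I : ℝ := ∫ ω, C ω ∂μ with hI
  set f : ℝ → ℝ := fun t => ∫ ω, min (C ω) t ∂μ with hf
  have hmin : ∀ t : ℝ, Integrable (fun ω => min (C ω) t) μ := aux_int_min hCint
  have hInonneg : 0 ≤ I := integral_nonneg hCnonneg
  have hfle : ∀ t, f t ≤ I := fun t =>
    integral_mono (hmin t) hCint (fun ω => min_le_left _ _)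
  have hfmono : ∀ {s t : ℝ}, s ≤ t → f s ≤ f t := fun {s t} hst =>
    integral_mono (hmin s) (hmin t) (fun ω => min_le_min le_rfl hst)
  have hf0 : f 0 = 0 := by
    simp only [hf]
    rw [show (fun ω => min (C ω) 0) = fun _ => (0 : ℝ) from
      funext fun ω => min_eq_right (hCnonneg ω)]
    simp
  have hfnonneg : ∀ t, 0 ≤ t → 0 ≤ f t := fun t ht => hf0 ▸ hfmono ht
  -- Lipschitz-type bound
  have hflip : ∀ s t : ℝ, f s - f t ≤ max (s - t) 0 := by
    intro s t
    have : f s ≤ f t + max (s - t) 0 := by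
      have : f s ≤ ∫ ω, (min (C ω) t + max (s - t) 0) ∂μ := by
        refine integral_mono (hmin s) ((hmin t).add (integrable_const _)) fun ω => ?_
        rcases le_total s t with h | h
        · exact le_add_of_le_of_nonneg (min_le_min le_rfl h) (le_max_right _ _)
        · calc min (C ω) s ≤ min (C ω) t + (s - t) := by
                rcases le_total (C ω) t with h' | h'
                · have h1 := min_le_left (C ω) s
                  rw [min_eq_left h']
                  linarith
                · rw [min_eq_right h']
                  have := min_le_right (C ω) s
                  linarith
            _ ≤ min (C ω) t + max (s - t) 0 := by
                gcongr; exact le_max_left _ _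
      simpa [integral_add (hmin t) (integrable_const _)] using this
    linarith
  -- T is bounded above by I for L ≥ 1
  have hTleI : ∀ L, 1 ≤ L → T L ≤ I := by
    intro L hL
    induction L with
    | zero => omega
    | succ n ih =>
      rcases Nat.eq_or_lt_of_le hL with h | h
      · have hn0 : n = 0 := by omega
        subst hn0
        simpa [hT1] using hInonneg
      · have hn : 1 ≤ n := by omega
        rw [hTrec n hn]
        nlinarith [hfle (T n), ih hn]
  -- T monotone from index 1
  have hTstep : ∀ L, 1 ≤ L → T L ≤ T (L + 1) := by
    intro L hL
    induction L with
    | zero => omega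
    | succ n ih =>
      rcases Nat.eq_or_lt_of_le hL with h | h
      · have h1 : n = 0 := by omega
        subst h1
        rw [hTrec 1 le_rfl, hT1]
        have h0 : (∫ ω, min (C ω) (0:ℝ) ∂μ) = 0 := hf0
        rw [h0]
        nlinarith [hInonneg, hp0]
      · have hn : 1 ≤ n := by omega
        rw [hTrec n hn, hTrec (n + 1) (by omega)]
        have := hfmono (ih hn)
        nlinarith
  have hTmono : Monotone (fun L => T (L + 1)) := by
    apply monotone_nat_of_le_succ
    intro n
    exact hTstep (n + 1) (by omega)
  -- V nonneg and antitone
  have hVnonneg : ∀ G, 0 ≤ V G := by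
    intro G
    induction G with
    | zero => simpa [hV0] using hInonneg
    | succ n ih =>
      rw [hVrec n]
      exact integral_nonneg fun ω => le_min (hCnonneg ω) ih
  have hVle : ∀ G, V G ≤ I := by
    intro G
    cases G with
    | zero => simp [hV0]
    | succ n => rw [hVrec n]; exact hfle (V n)
  have hVanti : Antitone V := by
    apply antitone_nat_of_succ_le
    intro n
    induction n with
    | zero => rw [hVrec 0, hV0]; exact hfle I
    | succ m ih =>
      calc V (m + 1 + 1) = f (V (m + 1)) := hVrec (m + 1)
        _ ≤ f (V m) := hfmono ih
        _ = V (m + 1) := (hVrec m).symm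
  -- limits
  have hTbdd : BddAbove (Set.range fun L => T (L + 1)) := by
    refine ⟨I, ?_⟩
    rintro x ⟨L, rfl⟩
    exact hTleI (L + 1) (by omega)
  have hVbdd : BddBelow (Set.range V) := ⟨0, by rintro x ⟨G, rfl⟩; exact hVnonneg G⟩
  set Tlim : ℝ := ⨆ L, T (L + 1) with hTlim
  set Vlim : ℝ := ⨅ G, V G with hVlim
  have hTtend' : Filter.Tendsto (fun L => T (L + 1)) Filter.atTop (nhds Tlim) :=
    tendsto_atTop_ciSup hTmono hTbdd
  have hTtend : Filter.Tendsto T Filter.atTop (nhds Tlim) :=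
    (Filter.tendsto_add_atTop_iff_nat 1).mp hTtend'
  have hVtend : Filter.Tendsto V Filter.atTop (nhds Vlim) :=
    tendsto_atTop_ciInf hVanti hVbdd
  -- key inequality: V G - T (G+1) ≤ (1-p)^G * I
  have hkey : ∀ G : ℕ, V G - T (G + 1) ≤ (1 - p) ^ G * I := by
    intro G
    induction G with
    | zero => simp [hV0, hT1]
    | succ n ih =>
      rw [hVrec n, hTrec (n + 1) (by omega)]
      have h1 : f (V n) - f (T (n + 1)) ≤ max (V n - T (n + 1)) 0 := hflip _ _
      have hq : (0:ℝ) ≤ 1 - p := by linarith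
      have h2 : max (V n - T (n + 1)) 0 ≤ (1 - p) ^ n * I := by
        apply max_le ih
        exact mul_nonneg (pow_nonneg hq n) hInonneg
      have h3 : f (V n) ≤ I := hfle _
      have : f (V n) - (p * I + (1 - p) * f (T (n + 1)))
          = p * (f (V n) - I) + (1 - p) * (f (V n) - f (T (n + 1))) := by ring
      rw [show ∫ ω, min (C ω) (V n) ∂μ = f (V n) from rfl,
        show ∫ ω, min (C ω) (T (n+1)) ∂μ = f (T (n+1)) from rfl]
      calc f (V n) - (p * I + (1 - p) * f (T (n + 1)))
          = p * (f (V n) - I) + (1 - p) * (f (V n) - f (T (n + 1))) := by ring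
        _ ≤ p * 0 + (1 - p) * ((1 - p) ^ n * I) := by
            apply add_le_add
            · apply mul_le_mul_of_nonneg_left (by linarith) hp0.le
            · exact mul_le_mul_of_nonneg_left (h1.trans h2) hq
        _ = (1 - p) ^ (n + 1) * I := by ring
  -- conclude Vlim ≤ Tlim
  have hVT : Vlim ≤ Tlim := by
    have hbound : ∀ G : ℕ, Vlim ≤ Tlim + (1 - p) ^ G * I := by
      intro G
      have h1 : Vlim ≤ V G := ciInf_le hVbdd G
      have h2 : T (G + 1) ≤ Tlim := le_ciSup hTbdd G
      have := hkey G
      linarith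
    have htend : Filter.Tendsto (fun G : ℕ => Tlim + (1 - p) ^ G * I)
        Filter.atTop (nhds (Tlim + 0 * I)) := by
      apply Filter.Tendsto.add tendsto_const_nhds
      apply Filter.Tendsto.mul_const
      exact tendsto_pow_atTop_nhds_zero_of_abs_lt_one (by rw [abs_lt]; constructor <;> linarith)
    rw [show Tlim + 0 * I = Tlim by ring] at htend
    exact ge_of_tendsto htend (Filter.Eventually.of_forall hbound)
  exact ⟨fun L hL => hV0 ▸ hTleI L hL, Tlim, Vlim, hTtend, hVtend, hVT⟩
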